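/- In the category of separable Chu spaces over Σ (|Σ| ≥ 2), a morphism φ is monic if and only if its backward component φ⁻ is surjective. -/

import Mathlib

universe u

/-- A Chu space over `S`: objects `A`, attributes `X`, satisfaction `r`. -/
structure ChuSpace (S : Type u) : Type (u+1) where
  A : Type u
  X : Type u
  r : A → X → S

/-- A Chu morphism `(f, g)`. -/
@[ext]
structure ChuHom {S : Type u} (C D : ChuSpace S) : Type u where
  f : C.A → D.A
  g : D.X → C.X
  comm : ∀ a y, D.r (f a) y = C.r a (g y)

variable {S : Type u}

/-- Composition of Chu morphisms: `ψ.comp φ = ψ ∘ φ`. -/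
def ChuHom.comp {C D E : ChuSpace S} (ψ : ChuHom D E) (φ : ChuHom C D) : ChuHom C E where
  f := ψ.f ∘ φ.f
  g := φ.g ∘ ψ.g
  comm := fun a y => by
    simp only [Function.comp_apply]
    rw [ψ.comm, φ.comm]

def ChuHom.idHom (C : ChuSpace S) : ChuHom C C := ⟨id, id, fun _ _ => rfl⟩

/-- `φ` is an isomorphism of Chu spaces. -/
def ChuIso {C D : ChuSpace S} (φ : ChuHom C D) : Prop :=
  ∃ ψ : ChuHom D C, φ.comp ψ = ChuHom.idHom D ∧ ψ.comp φ = ChuHom.idHom C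

/-- No repeated columns. -/
def ChuExtensional (C : ChuSpace S) : Prop :=
  ∀ x y : C.X, (∀ a, C.r a x = C.r a y) → x = y

/-- No repeated rows. -/
def ChuSeparable (C : ChuSpace S) : Prop :=
  ∀ a b : C.A, (∀ x, C.r a x = C.r b x) → a = b

def ChuBiextensional (C : ChuSpace S) : Prop := ChuExtensional C ∧ ChuSeparable C

/-- Discrete: every function `A → S` is realized by a column. -/
def ChuDiscrete (C : ChuSpace S) : Prop :=
  ∀ f : C.A → S, ∃ x : C.X, ∀ a, C.r a x = f a

/-- `φ` is monic in the full subcategory of Chu spaces satisfying `Obj`. -/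
def MonicIn (Obj : ChuSpace S → Prop) {C D : ChuSpace S} (φ : ChuHom C D) : Prop :=
  ∀ (E : ChuSpace S), Obj E → ∀ ψ₁ ψ₂ : ChuHom E C,
    φ.comp ψ₁ = φ.comp ψ₂ → ψ₁ = ψ₂

/-- Monics of the category `C` of Chu spaces: injective forward, surjective backward. -/
def IsMonoC {C D : ChuSpace S} (φ : ChuHom C D) : Prop :=
  Function.Injective φ.f ∧ Function.Surjective φ.g

/-- Monics of the categories `E` and `B`: injective forward component. -/
def IsMonoE {C D : ChuSpace S} (φ : ChuHom C D) : Prop :=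
  Function.Injective φ.f

/-- An ω-sequence of Chu spaces. -/
structure ChuSeq (S : Type u) : Type (u+1) where
  C : ℕ → ChuSpace S
  φ : ∀ i, ChuHom (C i) (C (i+1))

/-- A cocone from the ω-sequence `T` to `C`. -/
structure Cocone (T : ChuSeq S) (C : ChuSpace S) : Type u where
  ψ : ∀ i, ChuHom (T.C i) C
  compat : ∀ i, (ψ (i+1)).comp (T.φ i) = ψ i

/-- `c` is a colimit of `T` in the subcategory with objects `Obj` and morphisms `Mor`. -/
structure IsColimit (Obj : ChuSpace S → Prop)
    (Mor : ∀ C D : ChuSpace S, ChuHom C D → Prop)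
    (T : ChuSeq S) (C : ChuSpace S) (c : Cocone T C) : Prop where
  obj : Obj C
  mor : ∀ i, Mor _ _ (c.ψ i)
  univ : ∀ (C' : ChuSpace S), Obj C' → ∀ (c' : Cocone T C'), (∀ i, Mor _ _ (c'.ψ i)) →
      ∃! μ : ChuHom C C', Mor _ _ μ ∧ ∀ i, μ.comp (c.ψ i) = c'.ψ i

/-- A finite object in the subcategory `(Obj, Mor)`: every morphism into a colimit of an
ω-sequence factors through some stage. -/
def FiniteObjIn (Obj : ChuSpace S → Prop) (Mor : ∀ C D : ChuSpace S, ChuHom C D → Prop)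
    (F : ChuSpace S) : Prop :=
  Obj F ∧ ∀ (T : ChuSeq S), (∀ i, Obj (T.C i)) → (∀ i, Mor _ _ (T.φ i)) →
    ∀ (C : ChuSpace S) (c : Cocone T C), IsColimit Obj Mor T C c →
      ∀ φ : ChuHom F C, Mor _ _ φ →
        ∃ (i : ℕ) (ψ : ChuHom F (T.C i)), Mor _ _ ψ ∧ (c.ψ i).comp ψ = φ

/-- Strongly finite: a finite object of `iC` with finite object set,
finite and non-empty attribute set. -/
def StronglyFinite (F : ChuSpace S) : Prop :=
  FiniteObjIn (fun _ => True) (fun _ _ φ => IsMonoC φ) F ∧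
    Finite F.A ∧ Finite F.X ∧ Nonempty F.X


/-- In the category of separable Chu spaces over `S` (`|S| ≥ 2`), a morphism is monic
iff its backward component is surjective. -/
theorem stmt8 {S : Type u} (h2 : ∃ σ τ : S, σ ≠ τ) {C D : ChuSpace S} (φ : ChuHom C D)
    (hC : ChuSeparable C) (hD : ChuSeparable D) :
    MonicIn ChuSeparable φ ↔ Function.Surjective φ.g := by
  constructor
  · intro hmono
    by_contra hns
    simp only [Function.Surjective, not_forall, not_exists] at hns
    obtain ⟨x₀, hx₀⟩ := hns
    classical
    -- Build E: same rows as C, with an extra attribute duplicating column x₀.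
    set E : ChuSpace S := ⟨C.A, C.X ⊕ PUnit, fun a x => Sum.elim (C.r a) (fun _ => C.r a x₀) x⟩
      with hE
    have hEsep : ChuSeparable E := by
      intro a b h
      exact hC a b (fun x => h (Sum.inl x))
    let ψ₁ : ChuHom E C := ⟨id, Sum.inl, fun a y => rfl⟩
    let ψ₂ : ChuHom E C :=
      ⟨id, fun x => if x = x₀ then Sum.inr PUnit.unit else Sum.inl x, by
        intro a y
        by_cases h : y = x₀ <;> simp [h] <;> rfl⟩
    have hcomp : φ.comp ψ₁ = φ.comp ψ₂ := by
      apply ChuHom.ext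
      · show φ.f ∘ id = φ.f ∘ id
        rfl
      · show ψ₁.g ∘ φ.g = ψ₂.g ∘ φ.g
        funext y
        simp only [Function.comp_apply]
        have : φ.g y ≠ x₀ := fun h => hx₀ y h
        simp [ChuHom.comp, ψ₁, ψ₂, this]
    have := hmono E hEsep ψ₁ ψ₂ hcomp
    have hg : ψ₁.g x₀ = ψ₂.g x₀ := by rw [this]
    simp [ψ₁, ψ₂] at hg
  · intro hsurj E hE ψ₁ ψ₂ hcomp
    have hg : ψ₁.g = ψ₂.g := by
      funext x
      obtain ⟨y, rfl⟩ := hsurj x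
      exact congrFun (congrArg ChuHom.g hcomp) y
    have hf : ψ₁.f = ψ₂.f := by
      funext a
      apply hC
      intro x
      rw [ψ₁.comm, ψ₂.comm, hg]
    exact ChuHom.ext hf hg
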